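/- Let F_q have characteristic p and let m be a positive integer with m ≢ 0 (mod p) and m ≢ 1 (mod p). Then the number of multisets of m nonzero elements of F_q summing to 0 equals the number of multisets of m nonzero elements summing to 1. -/

import Mathlib

open Finset

/-- The number of multisets of `m` nonzero elements of `F` whose sum is `z`. -/
def partitionCount (F : Type*) [Field F] [Fintype F] [DecidableEq F]
    (m : ℕ) (z : F) : ℕ :=
  (Finset.univ.filter
    (fun s : Sym F m => (0 : F) ∉ (s : Multiset F) ∧ (s : Multiset F).sum = z)).card

def fullCount (F : Type*) [Field F] [Fintype F] [DecidableEq F]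
    (m : ℕ) (z : F) : ℕ :=
  (Finset.univ.filter (fun s : Sym F m => (s : Multiset F).sum = z)).card

lemma sym_map_sum {F : Type*} [Field F] {m : ℕ} (t : F) (s : Sym F m) :
    ((s.map (· + t)) : Multiset F).sum = (s : Multiset F).sum + m • t := by
  rcases s with ⟨s, hs⟩
  simp [Sym.map, Multiset.sum_map_add, ← hs, Multiset.map_const']

lemma fullCount_shift (F : Type*) [Field F] [Fintype F] [DecidableEq F]
    (m : ℕ) (t z : F) : fullCount F m z = fullCount F m (z + m • t) := by
  unfold fullCount
  apply Finset.card_nbij' (i := fun s : Sym F m => s.map (· + t))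
    (j := fun s : Sym F m => s.map (· + (-t)))
  · intro s hs
    simp only [mem_coe, mem_filter, mem_univ, true_and] at hs ⊢
    rw [sym_map_sum, hs]
  · intro s hs
    simp only [mem_coe, mem_filter, mem_univ, true_and] at hs ⊢
    rw [sym_map_sum, hs]
    simp [smul_neg]
  · intro s _
    apply Sym.coe_injective
    simp [Sym.coe_map, Multiset.map_map, Function.comp]
  · intro s _
    apply Sym.coe_injective
    simp [Sym.coe_map, Multiset.map_map, Function.comp]

lemma zeroMem_count (F : Type*) [Field F] [Fintype F] [DecidableEq F]
    (m : ℕ) (z : F) :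
    ((Finset.univ : Finset (Sym F (m+1))).filter
      (fun s : Sym F (m+1) => (0 : F) ∈ (s : Multiset F) ∧ (s : Multiset F).sum = z)).card
      = fullCount F m z := by
  unfold fullCount
  refine Finset.card_bij'
    (fun s hs => s.erase 0 (by
      simp only [mem_filter, mem_univ, true_and] at hs
      exact Sym.mem_coe.mp hs.1))
    (fun t _ => (0 : F) ::ₛ t) ?_ ?_ ?_ ?_
  · intro s hs
    simp only [mem_filter, mem_univ, true_and] at hs ⊢
    obtain ⟨h1, h2⟩ := hs
    rw [Sym.coe_erase]
    have h3 := Multiset.cons_erase h1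
    rw [← h2]
    conv_rhs => rw [← h3]
    rw [Multiset.sum_cons, zero_add]
  · intro t ht
    simp only [mem_filter, mem_univ, true_and] at ht ⊢
    refine ⟨?_, ?_⟩
    · rw [Sym.coe_cons]; exact Multiset.mem_cons_self _ _
    · rw [Sym.coe_cons, Multiset.sum_cons, zero_add, ht]
  · intro s hs; exact Sym.cons_erase _
  · intro t ht; exact Sym.erase_cons_head _ _

lemma partitionCount_add (F : Type*) [Field F] [Fintype F] [DecidableEq F]
    (m : ℕ) (z : F) :
    partitionCount F (m+1) z + fullCount F m z = fullCount F (m+1) z := by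
  rw [← zeroMem_count F m z]
  unfold partitionCount fullCount
  rw [← Finset.card_filter_add_card_filter_not
    (s := (Finset.univ : Finset (Sym F (m+1))).filter (fun s : Sym F (m+1) => (s : Multiset F).sum = z))
    (p := fun s => (0 : F) ∈ (s : Multiset F))]
  rw [Finset.filter_filter, Finset.filter_filter]
  simp only [and_comm]
  omega

lemma fullCount_shift' (F : Type*) [Field F] [Fintype F] [DecidableEq F]
    (m : ℕ) (hm : ((m : ℕ) : F) ≠ 0) (z z' : F) :
    fullCount F m z = fullCount F m z' := by
  have := fullCount_shift F m (((m : ℕ) : F)⁻¹ * (z' - z)) z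
  rwa [nsmul_eq_mul, ← mul_assoc, mul_inv_cancel₀ hm, one_mul, add_sub_cancel] at this

theorem stmt_1 (F : Type*) [Field F] [Fintype F] [DecidableEq F]
    (p : ℕ) [Fact p.Prime] [CharP F p] (m : ℕ) (hm : 0 < m)
    (h0 : ¬ m % p = 0) (h1 : ¬ m % p = 1) :
    partitionCount F m 0 = partitionCount F m 1 := by
  obtain ⟨k, rfl⟩ : ∃ k, m = k + 1 := ⟨m - 1, (Nat.succ_pred_eq_of_pos hm).symm⟩
  have hp : p.Prime := Fact.out
  have hmF : ((k + 1 : ℕ) : F) ≠ 0 := by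
    rw [Ne, CharP.cast_eq_zero_iff F p, Nat.dvd_iff_mod_eq_zero]; exact h0
  have hkF : ((k : ℕ) : F) ≠ 0 := by
    rw [Ne, CharP.cast_eq_zero_iff F p, Nat.dvd_iff_mod_eq_zero]
    intro h
    apply h1
    simp [Nat.add_mod, h, Nat.mod_eq_of_lt hp.one_lt]
  have e1 := partitionCount_add F k (0 : F)
  have e2 := partitionCount_add F k (1 : F)
  have e3 := fullCount_shift' F (k + 1) hmF (0 : F) 1
  have e4 := fullCount_shift' F k hkF (0 : F) 1
  omega
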